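/- The derivatives of δ and δ̃ (solutions of the canonical system) satisfy the coupled linear relations δ'(t) = −γ·δ̃(t) − γ·t·δ̃'(t) and δ̃'(t) = −γ̃·δ(t) − γ̃·t·δ'(t), and hence δ'(t) = (t·γ·γ̃·δ − γ·δ̃)/(1 − t²·γ·γ̃) whenever 1 − t²γγ̃ ≠ 0. -/

import Mathlib

open Finset

private lemma canonical_aux_deriv {N : ℕ} (n : ℕ) (d : Fin N → ℝ) (h f : ℝ → ℝ)
    (t : ℝ) (ht : 0 < t)
    (hh : DifferentiableAt ℝ h t)
    (hden : ∀ i, 1 + t * h t * d i ≠ 0)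
    (hf : ∀ s : ℝ, 0 < s → f s = (1 / (n : ℝ)) * ∑ i, d i / (1 + s * h s * d i)) :
    deriv f t = -(h t + t * deriv h t) *
      ((1 / (n : ℝ)) * ∑ i, (d i) ^ 2 / (1 + t * h t * d i) ^ 2) := by
  have hg : HasDerivAt (fun s => s * h s) (h t + t * deriv h t) t := by
    simpa [mul_comm] using (hasDerivAt_id t).fun_mul hh.hasDerivAt
  have hterm : ∀ i : Fin N, HasDerivAt (fun s => d i / (1 + s * h s * d i))
      (-((h t + t * deriv h t) * ((d i) ^ 2 / (1 + t * h t * d i) ^ 2))) t := by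
    intro i
    have hden' : HasDerivAt (fun s => 1 + s * h s * d i)
        ((h t + t * deriv h t) * d i) t := (hg.mul_const (d i)).const_add 1
    have h2 := (hasDerivAt_const t (d i)).fun_div hden' (hden i)
    refine h2.congr_deriv ?_
    field_simp
    ring
  have hsum : HasDerivAt (fun s => (1 / (n : ℝ)) * ∑ i, d i / (1 + s * h s * d i))
      ((1 / (n : ℝ)) * ∑ i, -((h t + t * deriv h t) * ((d i) ^ 2 / (1 + t * h t * d i) ^ 2))) t := by
    have := HasDerivAt.fun_sum (u := Finset.univ)
      (fun i _ => hterm i)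
    exact this.const_mul _
  have heqv : f =ᶠ[nhds t] fun s => (1 / (n : ℝ)) * ∑ i, d i / (1 + s * h s * d i) := by
    filter_upwards [isOpen_Ioi.mem_nhds (show t ∈ Set.Ioi (0:ℝ) from ht)] with s hs
    exact hf s hs
  rw [heqv.deriv_eq, hsum.deriv, Finset.mul_sum, Finset.mul_sum]
  rw [Finset.mul_sum]
  apply Finset.sum_congr rfl
  intro i _
  ring

/-- The coupled linear relations for the derivatives of δ and δ̃:
δ' = −γδ̃ − γtδ̃', δ̃' = −γ̃δ − γ̃tδ', hence
δ' = (tγγ̃δ − γδ̃)/(1 − t²γγ̃) when 1 − t²γγ̃ ≠ 0. -/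
theorem canonical_solution_derivatives
    (N n : ℕ) (hn : 0 < n)
    (d : Fin N → ℝ) (dt : Fin n → ℝ)
    (hd0 : ∀ i, 0 ≤ d i) (hdt0 : ∀ j, 0 ≤ dt j)
    (δ δt : ℝ → ℝ)
    (hdiff : ∀ s : ℝ, 0 < s → DifferentiableAt ℝ δ s ∧ DifferentiableAt ℝ δt s)
    (hpos : ∀ s : ℝ, 0 < s → 0 < δ s ∧ 0 < δt s)
    (heq1 : ∀ s : ℝ, 0 < s →
      δ s = (1 / (n : ℝ)) * ∑ i, d i / (1 + s * δt s * d i))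
    (heq2 : ∀ s : ℝ, 0 < s →
      δt s = (1 / (n : ℝ)) * ∑ j, dt j / (1 + s * δ s * dt j))
    (t : ℝ) (ht : 0 < t)
    (γ γt : ℝ)
    (hγ : γ = (1 / (n : ℝ)) * ∑ i, (d i) ^ 2 / (1 + t * δt t * d i) ^ 2)
    (hγt : γt = (1 / (n : ℝ)) * ∑ j, (dt j) ^ 2 / (1 + t * δ t * dt j) ^ 2) :
    deriv δ t = -γ * δt t - γ * t * deriv δt t ∧
    deriv δt t = -γt * δ t - γt * t * deriv δ t ∧
    (1 - t ^ 2 * γ * γt ≠ 0 →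
      deriv δ t = (t * γ * γt * δ t - γ * δt t) / (1 - t ^ 2 * γ * γt)) := by
  obtain ⟨hδp, hδtp⟩ := hpos t ht
  have hden1 : ∀ i, 1 + t * δt t * d i ≠ 0 := by
    intro i
    have := mul_nonneg (mul_nonneg ht.le hδtp.le) (hd0 i)
    linarith
  have hden2 : ∀ j, 1 + t * δ t * dt j ≠ 0 := by
    intro j
    have := mul_nonneg (mul_nonneg ht.le hδp.le) (hdt0 j)
    linarith
  have e1 : deriv δ t = -γ * δt t - γ * t * deriv δt t := by
    have := canonical_aux_deriv n d δt δ t ht (hdiff t ht).2 hden1 heq1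
    rw [this, ← hγ]; ring
  have e2 : deriv δt t = -γt * δ t - γt * t * deriv δ t := by
    have := canonical_aux_deriv n dt δ δt t ht (hdiff t ht).1 hden2 heq2
    rw [this, ← hγt]; ring
  refine ⟨e1, e2, fun hne => ?_⟩
  rw [eq_div_iff hne]
  linear_combination e1 - γ * t * e2
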